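/- arXiv:0912.1999 — 2 statements merged into one kernel-verified Lean document; each statement's English description precedes it below -/
import Mathlib

section
/- Let μ be a positive real number and a, b positive integers with a > μb. The probability P that a random ordering of a votes for A and b votes for B satisfies a_r > μ·b_r for all r is at most (a - ⌊μ⌋b)/(a + b). -/
/-- Number of A-votes (true) among the first `r` positions. -/
def countA (n : ℕ) (v : Fin n → Bool) (r : ℕ) : ℕ :=
  (Finset.univ.filter (fun i : Fin n => i.val < r ∧ v i = true)).card

/-- Number of B-votes (false) among the first `r` positions. -/
def countB (n : ℕ) (v : Fin n → Bool) (r : ℕ) : ℕ :=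
  (Finset.univ.filter (fun i : Fin n => i.val < r ∧ v i = false)).card

open Finset

lemma countA_eq_sum (n : ℕ) (v : Fin n → Bool) (r : ℕ) :
    countA n v r = ∑ i : Fin n, if i.val < r ∧ v i = true then 1 else 0 := by
  rw [countA, card_filter]

lemma countB_eq_sum (n : ℕ) (v : Fin n → Bool) (r : ℕ) :
    countB n v r = ∑ i : Fin n, if i.val < r ∧ v i = false then 1 else 0 := by
  rw [countB, card_filter]

lemma countA_snoc_of_le {n r : ℕ} (hr : r ≤ n) (w : Fin n → Bool) (x : Bool) :
    countA (n + 1) (Fin.snoc w x) r = countA n w r := by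
  rw [countA_eq_sum, countA_eq_sum, Fin.sum_univ_castSucc]
  simp [Fin.snoc_castSucc, Fin.snoc_last, Nat.not_lt.mpr hr]

lemma countB_snoc_of_le {n r : ℕ} (hr : r ≤ n) (w : Fin n → Bool) (x : Bool) :
    countB (n + 1) (Fin.snoc w x) r = countB n w r := by
  rw [countB_eq_sum, countB_eq_sum, Fin.sum_univ_castSucc]
  simp [Fin.snoc_castSucc, Fin.snoc_last, Nat.not_lt.mpr hr]

lemma countA_snoc_top (n : ℕ) (w : Fin n → Bool) (x : Bool) :
    countA (n + 1) (Fin.snoc w x) (n + 1) = countA n w n + (if x = true then 1 else 0) := by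
  rw [countA_eq_sum, countA_eq_sum, Fin.sum_univ_castSucc]
  congr 1
  · apply Finset.sum_congr rfl
    intro i _
    simp [Fin.snoc_castSucc, i.isLt, Nat.lt_succ_of_lt i.isLt]
  · simp [Fin.snoc_last]

lemma countB_snoc_top (n : ℕ) (w : Fin n → Bool) (x : Bool) :
    countB (n + 1) (Fin.snoc w x) (n + 1) = countB n w n + (if x = false then 1 else 0) := by
  rw [countB_eq_sum, countB_eq_sum, Fin.sum_univ_castSucc]
  congr 1
  · apply Finset.sum_congr rfl
    intro i _
    simp [Fin.snoc_castSucc, i.isLt, Nat.lt_succ_of_lt i.isLt]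
  · simp [Fin.snoc_last]

lemma countA_add_countB (n : ℕ) (v : Fin n → Bool) :
    countA n v n + countB n v n = n := by
  classical
  rw [countA, countB]
  have h1 : (Finset.univ.filter (fun i : Fin n => i.val < n ∧ v i = true))
      = Finset.univ.filter (fun i : Fin n => v i = true) := by
    apply filter_congr; intro i _; simp [i.isLt]
  have h2 : (Finset.univ.filter (fun i : Fin n => i.val < n ∧ v i = false))
      = Finset.univ.filter (fun i : Fin n => ¬ (v i = true)) := by
    apply filter_congr; intro i _; simp [i.isLt]
  rw [h1, h2, Finset.card_filter_add_card_filter_not]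
  simp



open Classical in
lemma card_count (n a : ℕ) :
    ((univ : Finset (Fin n → Bool)).filter
      (fun v => (univ.filter (fun i : Fin n => v i = true)).card = a)).card = n.choose a := by
  have h2 : (Finset.powersetCard a (univ : Finset (Fin n))).card = n.choose a := by
    rw [Finset.card_powersetCard, Finset.card_fin]
  rw [← h2]
  refine Finset.card_nbij' (fun v => univ.filter (fun i => v i = true))
    (fun s => fun i => decide (i ∈ s)) ?_ ?_ ?_ ?_
  · intro v hv
    simp only [Finset.mem_coe, mem_filter, mem_univ, true_and] at hv
    simp [Finset.mem_powersetCard, hv]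
  · intro s hs
    simp only [Finset.mem_coe, Finset.mem_powersetCard] at hs
    simp only [Finset.mem_coe, mem_filter, mem_univ, true_and]
    rw [← hs.2]
    congr 1
    ext i
    simp
  · intro v _
    funext i
    simp
  · intro s _
    ext i
    simp

def snocE (n : ℕ) : (Fin n → Bool) × Bool ≃ (Fin (n + 1) → Bool) where
  toFun p := Fin.snoc p.1 p.2
  invFun v := (fun i => v i.castSucc, v (Fin.last n))
  left_inv p := by
    ext i <;> simp
  right_inv v := by
    exact Fin.snoc_init_self v

lemma card_split {n : ℕ} (P : (Fin (n + 1) → Bool) → Prop) [DecidablePred P]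
    [DecidablePred (fun w : Fin n → Bool => P (Fin.snoc w true))]
    [DecidablePred (fun w : Fin n → Bool => P (Fin.snoc w false))] :
    ((univ : Finset (Fin (n + 1) → Bool)).filter P).card
      = ((univ : Finset (Fin n → Bool)).filter (fun w => P (Fin.snoc w true))).card
      + ((univ : Finset (Fin n → Bool)).filter (fun w => P (Fin.snoc w false))).card := by
  rw [card_filter, card_filter, card_filter]
  rw [← Equiv.sum_comp (snocE n) (fun v => if P v then 1 else 0)]
  rw [Fintype.sum_prod_type]
  have : ∀ w : Fin n → Bool,
      (∑ x : Bool, if P (snocE n (w, x)) then 1 else 0)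
        = (if P (Fin.snoc w true) then 1 else 0) + (if P (Fin.snoc w false) then 1 else 0) := by
    intro w
    rw [Fintype.sum_bool]
    congr 1 <;> exact if_congr Iff.rfl rfl rfl
  rw [Finset.sum_congr rfl (fun w _ => this w), Finset.sum_add_distrib]

def good (k n : ℕ) (v : Fin n → Bool) : Prop :=
  ∀ r, 1 ≤ r → r ≤ n → k * countB n v r < countA n v r

lemma good_snoc {k n : ℕ} {w : Fin n → Bool} {x : Bool}
    (h : good k (n + 1) (Fin.snoc w x)) : good k n w := by
  intro r h1 h2
  have := h r h1 (le_trans h2 (Nat.le_succ n))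
  rwa [countA_snoc_of_le h2, countB_snoc_of_le h2] at this

lemma card_countA (n a : ℕ)
    [DecidablePred (fun v : Fin n → Bool => countA n v n = a)] :
    ((univ : Finset (Fin n → Bool)).filter (fun v => countA n v n = a)).card = n.choose a := by
  have hv : ∀ v : Fin n → Bool, countA n v n = (univ.filter (fun i => v i = true)).card := by
    intro v; rw [countA]; congr 1; apply filter_congr; intro i _; simp [i.isLt]
  classical
  rw [← card_count n a]
  apply Finset.card_bij (fun v _ => v) <;> simp [hv]

open Classical in
lemma main_bound (k : ℕ) : ∀ n a b d : ℕ, n = a + b → a = k * b + d + 1 →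
    n * ((univ : Finset (Fin n → Bool)).filter
        (fun v => countA n v n = a ∧ good k n v)).card
      ≤ (d + 1) * n.choose a := by
  intro n
  induction n with
  | zero =>
    intro a b d hn ha
    exfalso
    have h0 : a = 0 := by omega
    rw [h0] at ha
    exact (Nat.succ_ne_zero _) ha.symm
  | succ n ih =>
    intro a b d hn ha
    have ha1 : 1 ≤ a := by rw [ha]; omega
    rcases b with _ | b'
    · -- b = 0 : a = n + 1
      have haa : a = n + 1 := by omega
      have hda : d + 1 = n + 1 := by
        have : a = d + 1 := by rw [ha]; ring
        omega
      have hcard : ((univ : Finset (Fin (n+1) → Bool)).filter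
          (fun v => countA (n+1) v (n+1) = a ∧ good k (n+1) v)).card ≤ 1 := by
        calc ((univ : Finset (Fin (n+1) → Bool)).filter
            (fun v => countA (n+1) v (n+1) = a ∧ good k (n+1) v)).card
            ≤ ((univ : Finset (Fin (n+1) → Bool)).filter
              (fun v => countA (n+1) v (n+1) = a)).card := by
              apply Finset.card_le_card
              apply Finset.monotone_filter_right
              intro v _ hv
              exact hv.1
          _ = (n+1).choose a := card_countA (n+1) a
          _ = 1 := by rw [haa, Nat.choose_self]
      calc (n+1) * ((univ : Finset (Fin (n+1) → Bool)).filter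
            (fun v => countA (n+1) v (n+1) = a ∧ good k (n+1) v)).card
          ≤ (n+1) * 1 := Nat.mul_le_mul_left _ hcard
        _ = (d+1) * 1 := by rw [hda]
        _ ≤ (d+1) * (n+1).choose a :=
            Nat.mul_le_mul_left _ (Nat.choose_pos (by omega : a ≤ n + 1))
    · -- b = b' + 1
      have hn' : n = a + b' := by omega
      have hn0 : 0 < n := by omega
      rw [card_split (fun v => countA (n+1) v (n+1) = a ∧ good k (n+1) v)]
      have hMt : ((univ : Finset (Fin n → Bool)).filter
          (fun w => countA (n+1) (Fin.snoc w true) (n+1) = a ∧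
            good k (n+1) (Fin.snoc w true))).card
          ≤ ((univ : Finset (Fin n → Bool)).filter
          (fun w => countA n w n = k * (b' + 1) + d ∧ good k n w)).card := by
        apply Finset.card_le_card
        apply Finset.monotone_filter_right
        intro w _ hw
        refine ⟨?_, good_snoc hw.2⟩
        have h1 := hw.1
        rw [countA_snoc_top] at h1
        simp at h1
        omega
      have hMf : ((univ : Finset (Fin n → Bool)).filter
          (fun w => countA (n+1) (Fin.snoc w false) (n+1) = a ∧
            good k (n+1) (Fin.snoc w false))).card
          ≤ ((univ : Finset (Fin n → Bool)).filter
          (fun w => countA n w n = a ∧ good k n w)).card := by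
        apply Finset.card_le_card
        apply Finset.monotone_filter_right
        intro w _ hw
        refine ⟨?_, good_snoc hw.2⟩
        have h1 := hw.1
        rw [countA_snoc_top] at h1
        simp at h1
        omega
      have hM2 : n * ((univ : Finset (Fin n → Bool)).filter
          (fun w => countA n w n = a ∧ good k n w)).card
          ≤ (k + d + 1) * n.choose a := ih a b' (k + d) hn' (by rw [ha]; ring)
      have hB1 : (n+1) * n.choose a = (b'+1) * (n+1).choose a := by
        have hch := Nat.choose_mul_succ_eq n a
        have hsub : n + 1 - a = b' + 1 := by omega
        rw [hsub] at hch
        rw [Nat.mul_comm (n+1) (n.choose a), hch, Nat.mul_comm]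
      rcases d with _ | d''
      · -- d = 0 : a = k*(b'+1) + 1, left branch empty
        have hM1 : ((univ : Finset (Fin n → Bool)).filter
            (fun w => countA n w n = k * (b' + 1) + 0 ∧ good k n w)).card = 0 := by
          rw [Finset.card_eq_zero, Finset.filter_eq_empty_iff]
          intro w _
          rintro ⟨hc, hg⟩
          have hsum := countA_add_countB n w
          have hgood := hg n hn0 le_rfl
          have hcb : countB n w n = b' + 1 := by omega
          rw [hcb, hc] at hgood
          omega
        have hMt0 : ((univ : Finset (Fin n → Bool)).filter
            (fun w => countA (n+1) (Fin.snoc w true) (n+1) = a ∧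
              good k (n+1) (Fin.snoc w true))).card = 0 := by omega
        rw [hMt0, Nat.zero_add]
        -- goal : (n+1) * Mf ≤ (0+1) * (n+1).choose a
        refine Nat.le_of_mul_le_mul_left ?_ hn0
        calc n * ((n+1) * ((univ : Finset (Fin n → Bool)).filter
              (fun w => countA (n+1) (Fin.snoc w false) (n+1) = a ∧
                good k (n+1) (Fin.snoc w false))).card)
            = (n+1) * (n * ((univ : Finset (Fin n → Bool)).filter
              (fun w => countA (n+1) (Fin.snoc w false) (n+1) = a ∧
                good k (n+1) (Fin.snoc w false))).card) := by ring
          _ ≤ (n+1) * (n * ((univ : Finset (Fin n → Bool)).filter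
              (fun w => countA n w n = a ∧ good k n w)).card) := by
              apply Nat.mul_le_mul_left
              exact Nat.mul_le_mul_left _ hMf
          _ ≤ (n+1) * ((k + 0 + 1) * n.choose a) := Nat.mul_le_mul_left _ hM2
          _ = (k + 1) * ((n+1) * n.choose a) := by ring
          _ = (k + 1) * ((b'+1) * (n+1).choose a) := by rw [hB1]
          _ = ((k+1) * (b'+1)) * (n+1).choose a := by ring
          _ = n * ((0 + 1) * (n+1).choose a) := by
              have hkb : (k+1) * (b'+1) = n := by
                have : a = k * (b'+1) + 1 := by omega
                rw [hn', this]; ring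
              rw [hkb]; ring
      · -- d = d'' + 1
        have hM1 : n * ((univ : Finset (Fin n → Bool)).filter
            (fun w => countA n w n = k * (b' + 1) + (d'' + 1) ∧ good k n w)).card
            ≤ (d'' + 1) * n.choose (k * (b' + 1) + (d'' + 1)) :=
          ih (k * (b' + 1) + (d'' + 1)) (b' + 1) d''
            (by omega) rfl
        have hB0 : (n+1) * n.choose (k * (b' + 1) + (d'' + 1)) = a * (n+1).choose a := by
          have hch := Nat.add_one_mul_choose_eq n (k * (b' + 1) + (d'' + 1))
          have haa : k * (b' + 1) + (d'' + 1) + 1 = a := by omega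
          rw [haa] at hch
          rw [hch, Nat.mul_comm]
        refine Nat.le_of_mul_le_mul_left ?_ hn0
        calc n * ((n+1) * (((univ : Finset (Fin n → Bool)).filter
              (fun w => countA (n+1) (Fin.snoc w true) (n+1) = a ∧
                good k (n+1) (Fin.snoc w true))).card
              + ((univ : Finset (Fin n → Bool)).filter
              (fun w => countA (n+1) (Fin.snoc w false) (n+1) = a ∧
                good k (n+1) (Fin.snoc w false))).card))
            = (n+1) * (n * ((univ : Finset (Fin n → Bool)).filter
              (fun w => countA (n+1) (Fin.snoc w true) (n+1) = a ∧
                good k (n+1) (Fin.snoc w true))).card)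
              + (n+1) * (n * ((univ : Finset (Fin n → Bool)).filter
              (fun w => countA (n+1) (Fin.snoc w false) (n+1) = a ∧
                good k (n+1) (Fin.snoc w false))).card) := by ring
          _ ≤ (n+1) * (n * ((univ : Finset (Fin n → Bool)).filter
              (fun w => countA n w n = k * (b' + 1) + (d'' + 1) ∧ good k n w)).card)
              + (n+1) * (n * ((univ : Finset (Fin n → Bool)).filter
              (fun w => countA n w n = a ∧ good k n w)).card) := by
              apply Nat.add_le_add
              · exact Nat.mul_le_mul_left _ (Nat.mul_le_mul_left _ hMt)
              · exact Nat.mul_le_mul_left _ (Nat.mul_le_mul_left _ hMf)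
          _ ≤ (n+1) * ((d'' + 1) * n.choose (k * (b' + 1) + (d'' + 1)))
              + (n+1) * ((k + (d'' + 1) + 1) * n.choose a) := by
              apply Nat.add_le_add
              · exact Nat.mul_le_mul_left _ hM1
              · exact Nat.mul_le_mul_left _ hM2
          _ = (d'' + 1) * ((n+1) * n.choose (k * (b' + 1) + (d'' + 1)))
              + (k + (d'' + 1) + 1) * ((n+1) * n.choose a) := by ring
          _ = (d'' + 1) * (a * (n+1).choose a)
              + (k + (d'' + 1) + 1) * ((b'+1) * (n+1).choose a) := by rw [hB0, hB1]
          _ = ((d'' + 1) * a + (k + d'' + 2) * (b'+1)) * (n+1).choose a := by ring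
          _ = n * ((d'' + 1 + 1) * (n+1).choose a) := by
              have hpoly : (d'' + 1) * a + (k + d'' + 2) * (b'+1) = n * (d'' + 1 + 1) := by
                have h1 : a = k * (b'+1) + (d'' + 1) + 1 := by omega
                have h2 : n = k * (b'+1) + (d'' + 1) + 1 + b' := by omega
                rw [h1, h2]; ring
              rw [hpoly]; ring


open Classical in
theorem ballot_strict_upper_bound (μ : ℝ) (a b : ℕ) (hμ : 0 < μ) (ha : 0 < a) (hb : 0 < b)
    (hab : μ * b < a) :
    (((Finset.univ.filter (fun v : Fin (a + b) → Bool =>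
        countA (a + b) v (a + b) = a ∧
        ∀ r, 1 ≤ r → r ≤ a + b →
          μ * (countB (a + b) v r : ℝ) < (countA (a + b) v r : ℝ))).card : ℝ) /
      ((Finset.univ.filter (fun v : Fin (a + b) → Bool =>
        countA (a + b) v (a + b) = a)).card : ℝ))
      ≤ ((a : ℝ) - (⌊μ⌋ : ℝ) * b) / ((a : ℝ) + b) := by
  classical
  have hk0 : (0:ℤ) ≤ ⌊μ⌋ := Int.floor_nonneg.mpr hμ.le
  set k : ℕ := ⌊μ⌋.toNat with hkdef
  have hkr : (k : ℝ) = (⌊μ⌋ : ℝ) := by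
    rw [hkdef]
    exact_mod_cast congrArg (fun z : ℤ => (z : ℝ)) (Int.toNat_of_nonneg hk0)
  have hkμ : (k : ℝ) ≤ μ := by rw [hkr]; exact Int.floor_le μ
  have hkb : k * b < a := by
    have h1 : ((k:ℝ)) * b ≤ μ * b :=
      mul_le_mul_of_nonneg_right hkμ (Nat.cast_nonneg b)
    have h2 : ((k * b : ℕ) : ℝ) < a := by push_cast; linarith
    exact_mod_cast h2
  obtain ⟨d, hd⟩ : ∃ d, a = k * b + d + 1 := ⟨a - k * b - 1, by omega⟩
  have hmain := main_bound k (a + b) a b d rfl hd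
  have hNM : ((Finset.univ.filter (fun v : Fin (a + b) → Bool =>
        countA (a + b) v (a + b) = a ∧
        ∀ r, 1 ≤ r → r ≤ a + b →
          μ * (countB (a + b) v r : ℝ) < (countA (a + b) v r : ℝ))).card)
      ≤ ((Finset.univ.filter (fun v : Fin (a + b) → Bool =>
        countA (a + b) v (a + b) = a ∧ good k (a + b) v)).card) := by
    apply Finset.card_le_card
    intro v hv
    simp only [Finset.mem_filter] at hv ⊢
    obtain ⟨hv0, hv1, hv2⟩ := hv
    refine ⟨hv0, hv1, ?_⟩
    intro r h1 h2
    have h3 := hv2 r h1 h2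
    have h4 : (k : ℝ) * (countB (a+b) v r : ℝ) ≤ μ * (countB (a+b) v r : ℝ) :=
      mul_le_mul_of_nonneg_right hkμ (Nat.cast_nonneg _)
    have h5 : ((k * countB (a+b) v r : ℕ) : ℝ) < ((countA (a+b) v r : ℕ) : ℝ) := by
      push_cast; linarith
    exact_mod_cast h5
  have hD := card_countA (a + b) a
  have hDpos : 0 < (a + b).choose a := Nat.choose_pos (by omega)
  have key : (((Finset.univ.filter (fun v : Fin (a + b) → Bool =>
        countA (a + b) v (a + b) = a ∧
        ∀ r, 1 ≤ r → r ≤ a + b →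
          μ * (countB (a + b) v r : ℝ) < (countA (a + b) v r : ℝ))).card) * (a + b))
      ≤ (d + 1) * (a + b).choose a := by
    calc ((Finset.univ.filter (fun v : Fin (a + b) → Bool =>
        countA (a + b) v (a + b) = a ∧
        ∀ r, 1 ≤ r → r ≤ a + b →
          μ * (countB (a + b) v r : ℝ) < (countA (a + b) v r : ℝ))).card) * (a + b)
        ≤ ((Finset.univ.filter (fun v : Fin (a + b) → Bool =>
          countA (a + b) v (a + b) = a ∧ good k (a + b) v)).card) * (a + b) :=
          Nat.mul_le_mul_right _ hNM
      _ = (a + b) * ((Finset.univ.filter (fun v : Fin (a + b) → Bool =>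
          countA (a + b) v (a + b) = a ∧ good k (a + b) v)).card) := Nat.mul_comm _ _
      _ ≤ (d + 1) * (a + b).choose a := hmain
  rw [hD]
  have habR : (0:ℝ) < (a:ℝ) + b := by positivity
  have hDR : (0:ℝ) < ((a + b).choose a : ℝ) := by exact_mod_cast hDpos
  rw [div_le_div_iff₀ hDR habR]
  have hgoalr : (a : ℝ) - (⌊μ⌋ : ℝ) * b = (d : ℝ) + 1 := by
    rw [← hkr]
    have : (a : ℝ) = (k : ℝ) * b + d + 1 := by exact_mod_cast congrArg (fun z : ℕ => (z : ℝ)) hd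
    rw [this]; ring
  rw [hgoalr]
  calc (((Finset.univ.filter (fun v : Fin (a + b) → Bool =>
        countA (a + b) v (a + b) = a ∧
        ∀ r, 1 ≤ r → r ≤ a + b →
          μ * (countB (a + b) v r : ℝ) < (countA (a + b) v r : ℝ))).card : ℝ) * ((a:ℝ) + b))
      = ((((Finset.univ.filter (fun v : Fin (a + b) → Bool =>
        countA (a + b) v (a + b) = a ∧
        ∀ r, 1 ≤ r → r ≤ a + b →
          μ * (countB (a + b) v r : ℝ) < (countA (a + b) v r : ℝ))).card) * (a + b) : ℕ) : ℝ) := by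
        push_cast; ring
    _ ≤ (((d + 1) * (a + b).choose a : ℕ) : ℝ) := by exact_mod_cast key
    _ = ((d : ℝ) + 1) * ((a + b).choose a : ℝ) := by push_cast; ring
end

section
/- Let μ > 0 be real and suppose a sequence of a votes for A and b votes for B has all weighted partial sums S'_r = a_r - μ·b_r nonnegative, with a ≥ μb. Then there exist at least ⌊a - μb + 1⌋ indices r such that S'_r ≤ S'_t for all t with r+1 ≤ t ≤ a+b. -/
/-- Cyclic permutation moving the first `i` votes to the end. -/
def cyc {n : ℕ} (v : Fin n → Bool) (i : ℕ) : Fin n → Bool :=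
  fun j => v ⟨(j.val + i) % n, Nat.mod_lt _ (Nat.lt_of_le_of_lt (Nat.zero_le j.val) j.isLt)⟩

lemma count_succ (n : ℕ) (c : Bool) (v : Fin n → Bool) (r : ℕ) (hr : r < n) :
    (Finset.univ.filter (fun i : Fin n => i.val < r+1 ∧ v i = c)).card
      = (Finset.univ.filter (fun i : Fin n => i.val < r ∧ v i = c)).card
        + (if v ⟨r, hr⟩ = c then 1 else 0) := by
  have h : (Finset.univ.filter (fun i : Fin n => i.val < r+1 ∧ v i = c))
      = (Finset.univ.filter (fun i : Fin n => i.val < r ∧ v i = c)) ∪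
        (Finset.univ.filter (fun i : Fin n => i = ⟨r, hr⟩ ∧ v i = c)) := by
    ext i
    simp only [Finset.mem_filter, Finset.mem_union, Finset.mem_univ, true_and]
    constructor
    · rintro ⟨h1, h2⟩
      rcases Nat.lt_or_ge i.val r with h3 | h3
      · exact Or.inl ⟨h3, h2⟩
      · exact Or.inr ⟨Fin.ext (show i.val = r by omega), h2⟩
    · rintro (⟨h1, h2⟩ | ⟨h1, h2⟩)
      · exact ⟨by omega, h2⟩
      · refine ⟨?_, h2⟩
        have : i.val = r := by rw [h1]
        omega
  rw [h, Finset.card_union_of_disjoint]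
  · congr 1
    by_cases hv : v ⟨r, hr⟩ = c
    · rw [if_pos hv]
      have : (Finset.univ.filter (fun i : Fin n => i = ⟨r, hr⟩ ∧ v i = c)) = {⟨r, hr⟩} := by
        ext i
        simp only [Finset.mem_filter, Finset.mem_univ, true_and, Finset.mem_singleton]
        constructor
        · exact fun h => h.1
        · rintro rfl; exact ⟨rfl, hv⟩
      rw [this, Finset.card_singleton]
    · rw [if_neg hv]
      have : (Finset.univ.filter (fun i : Fin n => i = ⟨r, hr⟩ ∧ v i = c)) = ∅ := by
        ext i
        simp only [Finset.mem_filter, Finset.mem_univ, true_and, Finset.notMem_empty,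
          iff_false]
        rintro ⟨rfl, h2⟩; exact hv h2
      rw [this, Finset.card_empty]
  · rw [Finset.disjoint_left]
    rintro i hi hi'
    simp only [Finset.mem_filter, Finset.mem_univ, true_and] at hi hi'
    have : i.val = r := by rw [hi'.1]
    omega

lemma count_stable (n : ℕ) (c : Bool) (v : Fin n → Bool) (r : ℕ) (hr : n ≤ r) :
    (Finset.univ.filter (fun i : Fin n => i.val < r+1 ∧ v i = c)).card
      = (Finset.univ.filter (fun i : Fin n => i.val < r ∧ v i = c)).card := by
  congr 1
  ext i
  simp only [Finset.mem_filter, Finset.mem_univ, true_and]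
  have := i.isLt
  constructor
  · rintro ⟨h1, h2⟩; exact ⟨by omega, h2⟩
  · rintro ⟨h1, h2⟩; exact ⟨by omega, h2⟩

lemma count_mono (n : ℕ) (c : Bool) (v : Fin n → Bool) {u r : ℕ} (h : u ≤ r) :
    (Finset.univ.filter (fun i : Fin n => i.val < u ∧ v i = c)).card
      ≤ (Finset.univ.filter (fun i : Fin n => i.val < r ∧ v i = c)).card := by
  apply Finset.card_le_card
  intro i hi
  simp only [Finset.mem_filter, Finset.mem_univ, true_and] at hi ⊢
  exact ⟨by omega, hi.2⟩

lemma count_le_add (n : ℕ) (c : Bool) (v : Fin n → Bool) {u r : ℕ} (h : u ≤ r) :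
    (Finset.univ.filter (fun i : Fin n => i.val < r ∧ v i = c)).card
      ≤ (Finset.univ.filter (fun i : Fin n => i.val < u ∧ v i = c)).card + (r - u) := by
  induction r, h using Nat.le_induction with
  | base => simp
  | succ r hur ih =>
    have step : (Finset.univ.filter (fun i : Fin n => i.val < r+1 ∧ v i = c)).card
        ≤ (Finset.univ.filter (fun i : Fin n => i.val < r ∧ v i = c)).card + 1 := by
      rcases Nat.lt_or_ge r n with h' | h'
      · rw [count_succ n c v r h']
        split <;> omega
      · rw [count_stable n c v r h']
        omega
    omega

lemma count_zero (n : ℕ) (c : Bool) (v : Fin n → Bool) :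
    (Finset.univ.filter (fun i : Fin n => i.val < 0 ∧ v i = c)).card = 0 := by
  simp

lemma filter_lt_card (n p : ℕ) (hp : p ≤ n) :
    (Finset.univ.filter (fun i : Fin n => i.val < p)).card = p := by
  induction p with
  | zero => simp
  | succ p ih =>
    have hp' : p ≤ n := by omega
    have h : (Finset.univ.filter (fun i : Fin n => i.val < p+1))
        = insert (⟨p, by omega⟩ : Fin n) (Finset.univ.filter (fun i : Fin n => i.val < p)) := by
      ext i
      simp only [Finset.mem_filter, Finset.mem_univ, true_and, Finset.mem_insert]
      constructor
      · intro h1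
        rcases Nat.lt_or_ge i.val p with h2 | h2
        · exact Or.inr h2
        · exact Or.inl (Fin.ext (show i.val = p by omega))
      · rintro (rfl | h1)
        · exact Nat.lt_succ_self p
        · omega
    rw [h, Finset.card_insert_of_notMem (by simp), ih hp']

lemma count_split (n : ℕ) (v : Fin n → Bool) (p : ℕ) (hp : p ≤ n) :
    countA n v p + countB n v p = p := by
  unfold countA countB
  have h1 : (Finset.univ.filter (fun i : Fin n => i.val < p ∧ v i = true))
      = (Finset.univ.filter (fun i : Fin n => i.val < p)).filter (fun i => v i = true) := by
    rw [Finset.filter_filter]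
  have h2 : (Finset.univ.filter (fun i : Fin n => i.val < p ∧ v i = false))
      = (Finset.univ.filter (fun i : Fin n => i.val < p)).filter (fun i => ¬ (v i = true)) := by
    rw [Finset.filter_filter]
    congr 1
    ext i
    simp [Bool.not_eq_true]
  rw [h1, h2, Finset.card_filter_add_card_filter_not, filter_lt_card n p hp]


lemma countA_succ (n : ℕ) (v : Fin n → Bool) (r : ℕ) (hr : r < n) :
    countA n v (r+1) = countA n v r + (if v ⟨r, hr⟩ = true then 1 else 0) := by
  unfold countA; exact count_succ n true v r hr

lemma countB_succ (n : ℕ) (v : Fin n → Bool) (r : ℕ) (hr : r < n) :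
    countB n v (r+1) = countB n v r + (if v ⟨r, hr⟩ = false then 1 else 0) := by
  unfold countB; exact count_succ n false v r hr

lemma countA_stable (n : ℕ) (v : Fin n → Bool) (r : ℕ) (hr : n ≤ r) :
    countA n v (r+1) = countA n v r := by
  unfold countA; exact count_stable n true v r hr

lemma countB_stable (n : ℕ) (v : Fin n → Bool) (r : ℕ) (hr : n ≤ r) :
    countB n v (r+1) = countB n v r := by
  unfold countB; exact count_stable n false v r hr

lemma countA_zero (n : ℕ) (v : Fin n → Bool) : countA n v 0 = 0 := by
  unfold countA; exact count_zero n true v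

lemma countB_zero (n : ℕ) (v : Fin n → Bool) : countB n v 0 = 0 := by
  unfold countB; exact count_zero n false v

lemma countA_le (n : ℕ) (v : Fin n → Bool) (r : ℕ) : countA n v r ≤ r := by
  have h1 := count_le_add n true v (Nat.zero_le r)
  have h2 := count_zero n true v
  unfold countA
  omega

lemma countA_le_add (n : ℕ) (v : Fin n → Bool) {u r : ℕ} (h : u ≤ r) :
    countA n v r ≤ countA n v u + (r - u) := by
  unfold countA; exact count_le_add n true v h

lemma countB_mono (n : ℕ) (v : Fin n → Bool) {u r : ℕ} (h : u ≤ r) :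
    countB n v u ≤ countB n v r := by
  unfold countB; exact count_mono n false v h


open Classical in
lemma aux_main (μ : ℝ) (N : ℕ) (S : ℕ → ℝ)
    (hS0 : S 0 = 0) (hS1 : S 1 = 1)
    (hstep : ∀ r, S (r+1) ≤ S r + 1)
    (hSle : ∀ p, p ≤ N → S p ≤ p)
    (hflat : ∀ p, p ≤ N → S p = p → ∀ u, 1 ≤ u → u ≤ p → S u = u) :
    ∀ r, 1 ≤ r → r ≤ N → (∀ t, r+1 ≤ t → t ≤ N → S r ≤ S t) → S r < r →
      (⌊S r⌋ + 1 : ℤ) ≤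
        ((Finset.Icc 1 r).filter (fun x => ∀ t, x+1 ≤ t → t ≤ N → S x ≤ S t)).card := by
  intro r
  induction r using Nat.strong_induction_on with
  | _ r IH =>
  intro hr1 hrN hgood hSlt
  have hrG : r ∈ (Finset.Icc 1 r).filter (fun x => ∀ t, x+1 ≤ t → t ≤ N → S x ≤ S t) := by
    simp only [Finset.mem_filter, Finset.mem_Icc]
    exact ⟨⟨hr1, le_refl r⟩, hgood⟩
  by_cases hcase : S r < 1
  · have h1 : (⌊S r⌋ : ℤ) < 1 := by
      exact_mod_cast Int.floor_lt.mpr (by exact_mod_cast hcase)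
    have h2 : 0 < ((Finset.Icc 1 r).filter
        (fun x => ∀ t, x+1 ≤ t → t ≤ N → S x ≤ S t)).card :=
      Finset.card_pos.mpr ⟨r, hrG⟩
    omega
  · push_neg at hcase
    have hr2 : 2 ≤ r := by
      by_contra h
      push_neg at h
      interval_cases r
      rw [hS1] at hSlt
      norm_num at hSlt
    have hTne : ((Finset.range r).filter (fun t => S t < S r)).Nonempty := by
      refine ⟨0, ?_⟩
      simp only [Finset.mem_filter, Finset.mem_range]
      exact ⟨by omega, by rw [hS0]; linarith⟩
    obtain ⟨p, hpmem, hple⟩ : ∃ p, p ∈ (Finset.range r).filter (fun t => S t < S r) ∧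
        ∀ t ∈ (Finset.range r).filter (fun t => S t < S r), t ≤ p :=
      ⟨_, Finset.max'_mem _ hTne, fun t ht => Finset.le_max' _ t ht⟩
    simp only [Finset.mem_filter, Finset.mem_range] at hpmem
    obtain ⟨hpr, hpS⟩ := hpmem
    have hmax : ∀ t, p < t → t < r → S r ≤ S t := by
      intro t h1 h2
      by_contra h
      push_neg at h
      have ht : t ∈ (Finset.range r).filter (fun t => S t < S r) := by
        simp only [Finset.mem_filter, Finset.mem_range]
        exact ⟨h2, h⟩
      have := hple t ht
      omega
    have hSp1 : S r ≤ S (p+1) := by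
      rcases Nat.lt_or_ge (p+1) r with h | h
      · exact hmax _ (Nat.lt_succ_self p) h
      · have h' : p + 1 = r := by omega
        rw [h']
    have hSpge : S r - 1 ≤ S p := by
      have := hstep p
      linarith
    by_cases hp0 : p = 0
    · -- S r = 1; both 1 and r are good
      subst hp0
      have h1r : S r ≤ 1 := by
        have := hmax 1 (by omega) (by omega)
        rw [hS1] at this
        -- this : S r ≤ 1
        exact this
      have hSr1 : S r = 1 := le_antisymm h1r hcase
      have h1G : (1 : ℕ) ∈ (Finset.Icc 1 r).filter
          (fun x => ∀ t, x+1 ≤ t → t ≤ N → S x ≤ S t) := by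
        simp only [Finset.mem_filter, Finset.mem_Icc]
        refine ⟨⟨le_refl 1, by omega⟩, ?_⟩
        intro t ht htN
        rw [hS1]
        rcases lt_trichotomy t r with h | h | h
        · have := hmax t (by omega) h
          linarith
        · subst h; linarith
        · have := hgood t (by omega) htN
          linarith
      have hsub : ({1, r} : Finset ℕ) ⊆ (Finset.Icc 1 r).filter
          (fun x => ∀ t, x+1 ≤ t → t ≤ N → S x ≤ S t) := by
        intro x hx
        simp only [Finset.mem_insert, Finset.mem_singleton] at hx
        rcases hx with rfl | rfl
        · exact h1G
        · exact hrG
      have hcard : 2 ≤ ((Finset.Icc 1 r).filter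
          (fun x => ∀ t, x+1 ≤ t → t ≤ N → S x ≤ S t)).card := by
        have h2 : ({1, r} : Finset ℕ).card = 2 := by
          rw [Finset.card_insert_of_notMem (by simp; omega), Finset.card_singleton]
        calc 2 = ({1, r} : Finset ℕ).card := h2.symm
        _ ≤ _ := Finset.card_le_card hsub
      have hfl : (⌊S r⌋ : ℤ) = 1 := by
        rw [hSr1]
        exact Int.floor_one
      omega
    · have hp1 : 1 ≤ p := Nat.one_le_iff_ne_zero.mpr hp0
      have hpN : p ≤ N := by omega
      have hgoodp : ∀ t, p+1 ≤ t → t ≤ N → S p ≤ S t := by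
        intro t ht1 ht2
        rcases lt_trichotomy t r with h | h | h
        · exact le_of_lt (lt_of_lt_of_le hpS (hmax t (by omega) h))
        · subst h; linarith
        · have := hgood t (by omega) ht2
          linarith
      by_cases hflatp : S p = p
      · -- all-A prefix case
        have hall : ∀ u, 1 ≤ u → u ≤ p → S u = u := hflat p hpN hflatp
        have hSrp : (p : ℝ) < S r := by rw [← hflatp]; exact hpS
        have hgoodu : ∀ u, 1 ≤ u → u ≤ p →
            u ∈ (Finset.Icc 1 r).filter (fun x => ∀ t, x+1 ≤ t → t ≤ N → S x ≤ S t) := by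
          intro u hu1 hup
          simp only [Finset.mem_filter, Finset.mem_Icc]
          refine ⟨⟨hu1, by omega⟩, ?_⟩
          intro t ht htN
          rw [hall u hu1 hup]
          have hucast : (u : ℝ) ≤ p := by exact_mod_cast hup
          rcases le_or_gt t p with h | h
          · rw [hall t (by omega) h]
            exact_mod_cast Nat.le_of_succ_le ht
          · rcases lt_trichotomy t r with h' | h' | h'
            · have := hmax t h h'
              linarith
            · subst h'; linarith
            · have := hgood t (by omega) htN
              linarith
        have hSr_le : S r ≤ p + 1 := by rw [hflatp] at hSpge; linarith
        rcases lt_or_eq_of_le hSr_le with hlt | heq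
        · -- ⌊S r⌋ ≤ p ; good set ⊇ [1,p] ∪ {r}
          have hfl : (⌊S r⌋ : ℤ) ≤ p := by
            have : (⌊S r⌋ : ℤ) < p + 1 := by
              exact_mod_cast Int.floor_lt.mpr (by push_cast; linarith)
            omega
          have hsub : Finset.Icc 1 p ∪ {r} ⊆ (Finset.Icc 1 r).filter
              (fun x => ∀ t, x+1 ≤ t → t ≤ N → S x ≤ S t) := by
            intro x hx
            rcases Finset.mem_union.mp hx with h | h
            · simp only [Finset.mem_Icc] at h
              exact hgoodu x h.1 h.2
            · simp only [Finset.mem_singleton] at h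
              subst h; exact hrG
          have hcard : p + 1 ≤ ((Finset.Icc 1 r).filter
              (fun x => ∀ t, x+1 ≤ t → t ≤ N → S x ≤ S t)).card := by
            have hd : Disjoint (Finset.Icc 1 p) ({r} : Finset ℕ) := by
              simp only [Finset.disjoint_singleton_right, Finset.mem_Icc]
              omega
            have : (Finset.Icc 1 p ∪ {r}).card = p + 1 := by
              rw [Finset.card_union_of_disjoint hd, Nat.card_Icc, Finset.card_singleton]
              omega
            calc p + 1 = (Finset.Icc 1 p ∪ {r}).card := this.symm
            _ ≤ _ := Finset.card_le_card hsub
          omega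
        · -- S r = p + 1, also p+1 is good and p+1 < r
          have hpr1 : p + 1 < r := by
            rcases Nat.lt_or_ge (p+1) r with h | h
            · exact h
            · exfalso
              have hr' : p + 1 = r := by omega
              have hc : (r : ℝ) = (p : ℝ) + 1 := by rw [← hr']; push_cast; ring
              rw [hc] at hSlt
              linarith
          have hSp1eq : S (p+1) = S r := by
            have h1 : S (p+1) ≤ S p + 1 := hstep p
            rw [hflatp] at h1
            rw [← heq] at h1
            exact le_antisymm h1 hSp1
          have hgoodp1 : (p+1) ∈ (Finset.Icc 1 r).filter
              (fun x => ∀ t, x+1 ≤ t → t ≤ N → S x ≤ S t) := by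
            simp only [Finset.mem_filter, Finset.mem_Icc]
            refine ⟨⟨by omega, by omega⟩, ?_⟩
            intro t ht htN
            rw [hSp1eq]
            rcases lt_trichotomy t r with h' | h' | h'
            · exact hmax t (by omega) h'
            · subst h'; exact le_refl _
            · exact hgood t (by omega) htN
          have hsub : Finset.Icc 1 (p+1) ∪ {r} ⊆ (Finset.Icc 1 r).filter
              (fun x => ∀ t, x+1 ≤ t → t ≤ N → S x ≤ S t) := by
            intro x hx
            rcases Finset.mem_union.mp hx with h | h
            · simp only [Finset.mem_Icc] at h
              rcases eq_or_lt_of_le h.2 with h2 | h2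
              · subst h2; exact hgoodp1
              · exact hgoodu x h.1 (by omega)
            · simp only [Finset.mem_singleton] at h
              subst h; exact hrG
          have hcard : p + 2 ≤ ((Finset.Icc 1 r).filter
              (fun x => ∀ t, x+1 ≤ t → t ≤ N → S x ≤ S t)).card := by
            have hd : Disjoint (Finset.Icc 1 (p+1)) ({r} : Finset ℕ) := by
              simp only [Finset.disjoint_singleton_right, Finset.mem_Icc]
              omega
            have : (Finset.Icc 1 (p+1) ∪ {r}).card = p + 2 := by
              rw [Finset.card_union_of_disjoint hd, Nat.card_Icc, Finset.card_singleton]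
              omega
            calc p + 2 = (Finset.Icc 1 (p+1) ∪ {r}).card := this.symm
            _ ≤ _ := Finset.card_le_card hsub
          have hfl : (⌊S r⌋ : ℤ) = p + 1 := by
            rw [heq]
            rw [show ((p : ℝ) + 1) = ((p + 1 : ℕ) : ℝ) by push_cast; ring]
            exact_mod_cast Int.floor_natCast (p+1)
          omega
      · -- S p < p : use induction hypothesis
        have hSpp : S p < p := lt_of_le_of_ne (hSle p hpN) hflatp
        have hIH := IH p hpr hp1 hpN hgoodp hSpp
        have hsub : insert r ((Finset.Icc 1 p).filter
              (fun x => ∀ t, x+1 ≤ t → t ≤ N → S x ≤ S t))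
            ⊆ (Finset.Icc 1 r).filter (fun x => ∀ t, x+1 ≤ t → t ≤ N → S x ≤ S t) := by
          intro x hx
          rcases Finset.mem_insert.mp hx with rfl | h
          · exact hrG
          · simp only [Finset.mem_filter, Finset.mem_Icc] at h ⊢
            exact ⟨⟨h.1.1, by omega⟩, h.2⟩
        have hnm : r ∉ (Finset.Icc 1 p).filter
            (fun x => ∀ t, x+1 ≤ t → t ≤ N → S x ≤ S t) := by
          simp only [Finset.mem_filter, Finset.mem_Icc]
          push_neg
          intro h
          omega
        have hcard : ((Finset.Icc 1 p).filter
              (fun x => ∀ t, x+1 ≤ t → t ≤ N → S x ≤ S t)).card + 1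
            ≤ ((Finset.Icc 1 r).filter
              (fun x => ∀ t, x+1 ≤ t → t ≤ N → S x ≤ S t)).card := by
          calc _ = (insert r ((Finset.Icc 1 p).filter
              (fun x => ∀ t, x+1 ≤ t → t ≤ N → S x ≤ S t))).card :=
            (Finset.card_insert_of_notMem hnm).symm
          _ ≤ _ := Finset.card_le_card hsub
        have hfl : (⌊S r⌋ : ℤ) ≤ ⌊S p⌋ + 1 := by
          have h1 : S r ≤ S p + 1 := by linarith
          calc (⌊S r⌋ : ℤ) ≤ ⌊S p + 1⌋ := Int.floor_le_floor h1
          _ = ⌊S p⌋ + 1 := Int.floor_add_one _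
        omega


open Classical in
theorem count_cute_indices (μ : ℝ) (a b : ℕ) (hμ : 0 < μ) (ha : 0 < a) (hb : 0 < b)
    (hab : μ * b ≤ a)
    (v : Fin (a + b) → Bool) (hA : countA (a + b) v (a + b) = a)
    (hcute : ∀ r, r ≤ a + b →
      0 ≤ (countA (a + b) v r : ℝ) - μ * (countB (a + b) v r : ℝ)) :
    (⌊(a : ℝ) - μ * b + 1⌋ : ℤ) ≤
      ((Finset.Icc 1 (a + b)).filter (fun r =>
        ∀ t, r + 1 ≤ t → t ≤ a + b →
          (countA (a + b) v r : ℝ) - μ * (countB (a + b) v r : ℝ) ≤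
            (countA (a + b) v t : ℝ) - μ * (countB (a + b) v t : ℝ))).card := by
  have hS0 : (countA (a+b) v 0 : ℝ) - μ * (countB (a+b) v 0 : ℝ) = 0 := by
    rw [countA_zero, countB_zero]
    norm_num
  have hstep : ∀ r, (countA (a+b) v (r+1) : ℝ) - μ * (countB (a+b) v (r+1) : ℝ)
      ≤ (countA (a+b) v r : ℝ) - μ * (countB (a+b) v r : ℝ) + 1 := by
    intro r
    rcases Nat.lt_or_ge r (a+b) with hr | hr
    · have hA' := countA_succ (a+b) v r hr
      have hB' := countB_succ (a+b) v r hr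
      cases hv : v ⟨r, hr⟩ with
      | true =>
        rw [hv] at hA' hB'
        simp only [if_pos, if_neg, Bool.true_eq_false, ite_true, ite_false] at hA' hB'
        rw [hA', hB']
        push_cast
        linarith
      | false =>
        rw [hv] at hA' hB'
        simp only [if_pos, if_neg, Bool.false_eq_true, ite_true, ite_false] at hA' hB'
        rw [hA', hB']
        push_cast
        linarith
    · rw [countA_stable (a+b) v r hr, countB_stable (a+b) v r hr]
      linarith
  have hS1 : (countA (a+b) v 1 : ℝ) - μ * (countB (a+b) v 1 : ℝ) = 1 := by
    have h0 : 0 < a + b := by omega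
    have hA' := countA_succ (a+b) v 0 h0
    have hB' := countB_succ (a+b) v 0 h0
    have hc := hcute 1 (by omega)
    cases hv : v ⟨0, h0⟩ with
    | true =>
      rw [hv] at hA' hB'
      simp only [Bool.true_eq_false, ite_true, ite_false] at hA' hB'
      rw [countA_zero] at hA'
      rw [countB_zero] at hB'
      norm_num at hA' hB'
      rw [hA', hB']
      norm_num
    | false =>
      exfalso
      rw [hv] at hA' hB'
      simp only [Bool.false_eq_true, ite_true, ite_false] at hA' hB'
      rw [countA_zero] at hA'
      rw [countB_zero] at hB'
      norm_num at hA' hB'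
      rw [hA', hB'] at hc
      push_cast at hc
      linarith
  have hSle : ∀ p, p ≤ a + b →
      (countA (a+b) v p : ℝ) - μ * (countB (a+b) v p : ℝ) ≤ p := by
    intro p _
    have h1 : (countA (a+b) v p : ℝ) ≤ p := by exact_mod_cast countA_le (a+b) v p
    have h2 : 0 ≤ μ * (countB (a+b) v p : ℝ) :=
      mul_nonneg hμ.le (Nat.cast_nonneg _)
    linarith
  have hflat : ∀ p, p ≤ a + b →
      (countA (a+b) v p : ℝ) - μ * (countB (a+b) v p : ℝ) = p →
      ∀ u, 1 ≤ u → u ≤ p →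
        (countA (a+b) v u : ℝ) - μ * (countB (a+b) v u : ℝ) = u := by
    intro p hp hpe u hu1 hup
    have h1 : (countA (a+b) v p : ℝ) ≤ p := by exact_mod_cast countA_le (a+b) v p
    have h2 : 0 ≤ μ * (countB (a+b) v p : ℝ) :=
      mul_nonneg hμ.le (Nat.cast_nonneg _)
    have hAp : (countA (a+b) v p : ℝ) = p := le_antisymm h1 (by linarith)
    have hBr : μ * (countB (a+b) v p : ℝ) = 0 := by linarith
    have hBp : countB (a+b) v p = 0 := by
      rcases mul_eq_zero.mp hBr with h | h
      · exact absurd h (ne_of_gt hμ)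
      · exact_mod_cast h
    have hApn : countA (a+b) v p = p := by exact_mod_cast hAp
    have hAu : countA (a+b) v u = u := by
      have h3 := countA_le_add (a+b) v hup
      have h4 := countA_le (a+b) v u
      omega
    have hBu : countB (a+b) v u = 0 := by
      have := countB_mono (a+b) v hup
      omega
    rw [hAu, hBu]
    push_cast
    ring
  have hsplit := count_split (a+b) v (a+b) le_rfl
  have hBN : countB (a+b) v (a+b) = b := by
    unfold countA countB at *
    omega
  have hSN : (countA (a+b) v (a+b) : ℝ) - μ * (countB (a+b) v (a+b) : ℝ)
      = (a : ℝ) - μ * b := by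
    rw [hA, hBN]
  have hgoodN : ∀ t, (a+b) + 1 ≤ t → t ≤ a + b →
      (countA (a+b) v (a+b) : ℝ) - μ * (countB (a+b) v (a+b) : ℝ)
        ≤ (countA (a+b) v t : ℝ) - μ * (countB (a+b) v t : ℝ) := by
    intro t h1 h2
    omega
  have hSNlt : (countA (a+b) v (a+b) : ℝ) - μ * (countB (a+b) v (a+b) : ℝ)
      < ((a + b : ℕ) : ℝ) := by
    rw [hSN]
    have hbpos : (0 : ℝ) < b := by exact_mod_cast hb
    have := mul_pos hμ hbpos
    push_cast
    linarith
  have key := aux_main μ (a+b)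
    (fun r => (countA (a+b) v r : ℝ) - μ * (countB (a+b) v r : ℝ))
    hS0 hS1 hstep hSle hflat (a+b) (by omega) le_rfl hgoodN hSNlt
  rw [Int.floor_add_one, ← hSN]
  exact key
end
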